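/- Let an incomplete weighted profile over candidates {A,B,C} have odd total weight W, and for candidates x,y let D(y,x) denote the total weight of voters whose partial order ranks y above x. Consider the cup rule with agenda ((A vs B), then C). Then A is a possible winner (i.e., A is the cup winner in some completion of the profile) if and only if D(B,A) < W/2 and D(C,A) < W/2; likewise, B is a possible winner if and only if D(A,B) < W/2 and D(C,B) < W/2. -/

import Mathlib

/-!
For an incomplete weighted profile over {A,B,C} with odd total weight W, and
the cup with agenda ((A vs B), then C): A is a possible winner iff
D(B,A) < W/2 and D(C,A) < W/2, and B is a possible winner iff
D(A,B) < W/2 and D(C,B) < W/2, where D(y,x) is the weight of voters whose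
partial order already ranks y above x.
-/

namespace Stmt11

attribute [local instance] Classical.propDecidable

inductive Cand where
  | A | B | C
deriving DecidableEq

open Cand

/-- Total weight of voters ranking `x` above `y` in (possibly partial)
profile `R`. -/
noncomputable def wAbove {V : Type*} [Fintype V]
    (w : V → ℕ) (R : V → Cand → Cand → Prop) (x y : Cand) : ℕ :=
  ∑ v, if R v x y then w v else 0

/-- Winner of the cup with agenda ((A vs B), then C) for a complete profile. -/
noncomputable def cupWinner {V : Type*} [Fintype V]
    (w : V → ℕ) (R : V → Cand → Cand → Prop) : Cand :=
  let w1 := if wAbove w R A B > wAbove w R B A then A else B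
  if wAbove w R w1 C > wAbove w R C w1 then w1 else C


/-- Rank function building a linear extension of `q`, placing `a` as high
as possible (rank 0 = top). -/
noncomputable def rk (q : Cand → Cand → Prop) (a b c : Cand) : Cand → ℕ := fun x =>
  if x = a then (if q b a then 1 else 0) + (if q c a then 1 else 0)
  else if x = b then
    (if q b a then (if q c a then (if q c b then 1 else 0) else 0)
     else (if q c a then 2 else (if q c b then 2 else 1)))
  else
    (if q c a then (if q b a then (if q c b then 0 else 1) else 0)
     else (if q b a then 2 else (if q c b then 1 else 2)))

section rkLemmas

variable {q : Cand → Cand → Prop} {a b c : Cand}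

lemma rk_a : rk q a b c a = (if q b a then 1 else 0) + (if q c a then 1 else 0) := by
  simp [rk]

lemma rk_b (hab : a ≠ b) :
    rk q a b c b =
      (if q b a then (if q c a then (if q c b then 1 else 0) else 0)
       else (if q c a then 2 else (if q c b then 2 else 1))) := by
  simp [rk, hab.symm]

lemma rk_c (hac : a ≠ c) (hbc : b ≠ c) :
    rk q a b c c =
      (if q c a then (if q b a then (if q c b then 0 else 1) else 0)
       else (if q b a then 2 else (if q c b then 1 else 2))) := by
  simp [rk, hac.symm, hbc.symm]

lemma rk_extend (hirr : ∀ x, ¬ q x x) (htr : ∀ {x y z}, q x y → q y z → q x z)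
    (hab : a ≠ b) (hac : a ≠ c) (hbc : b ≠ c)
    (hcov : ∀ x : Cand, x = a ∨ x = b ∨ x = c) {x y : Cand} (hq : q x y) :
    rk q a b c x < rk q a b c y := by
  have T4 : q b c → q c a → q b a := htr
  have T6 : q c b → q b a → q c a := htr
  have S1 : q a b → q b a → False := fun h h' => hirr a (htr h h')
  have S2 : q a c → q c a → False := fun h h' => hirr a (htr h h')
  have S3 : q b c → q c b → False := fun h h' => hirr b (htr h h')
  rcases hcov x with rfl | rfl | rfl <;> rcases hcov y with rfl | rfl | rfl <;>
    simp only [rk_a, rk_b hab, rk_c hac hbc] <;>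
    first
      | exact absurd hq (hirr _)
      | (split_ifs <;> first | omega | tauto)

lemma rk_ne (hab : a ≠ b) (hac : a ≠ c) (hbc : b ≠ c)
    (hcov : ∀ x : Cand, x = a ∨ x = b ∨ x = c) {x y : Cand} (hxy : x ≠ y) :
    rk q a b c x ≠ rk q a b c y := by
  rcases hcov x with rfl | rfl | rfl <;> rcases hcov y with rfl | rfl | rfl <;>
    first
      | exact absurd rfl hxy
      | (simp only [rk_a, rk_b hab, rk_c hac hbc]; split_ifs <;> omega)

lemma rk_fav_b (hab : a ≠ b) (h : ¬ q b a) : rk q a b c a < rk q a b c b := by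
  simp only [rk_a, rk_b hab]
  split_ifs <;> first | omega | tauto

lemma rk_fav_c (hac : a ≠ c) (hbc : b ≠ c) (h : ¬ q c a) :
    rk q a b c a < rk q a b c c := by
  simp only [rk_a, rk_c hac hbc]
  split_ifs <;> first | omega | tauto

end rkLemmas

section wLemmas

variable {V : Type*} [Fintype V] (w : V → ℕ)

lemma wAbove_mono {P R : V → Cand → Cand → Prop} {x y : Cand}
    (h : ∀ v, P v x y → R v x y) : wAbove w P x y ≤ wAbove w R x y := by
  refine Finset.sum_le_sum fun v _ => ?_
  by_cases hv : P v x y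
  · simp [hv, h v hv]
  · simp [hv]

lemma wAbove_add {R : V → Cand → Cand → Prop}
    (hR : ∀ v, IsStrictTotalOrder Cand (R v)) {x y : Cand} (hxy : x ≠ y) :
    wAbove w R x y + wAbove w R y x = ∑ v, w v := by
  rw [wAbove, wAbove, ← Finset.sum_add_distrib]
  refine Finset.sum_congr rfl fun v _ => ?_
  haveI := hR v
  have hasym : R v x y → R v y x → False :=
    fun h h' => irrefl_of (R v) x (trans_of (R v) h h')
  rcases trichotomous_of (R v) x y with h | h | h
  · rw [if_pos h, if_neg fun h' => hasym h h', add_zero]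
  · exact absurd h hxy
  · rw [if_neg fun h' => hasym h' h, if_pos h, zero_add]

lemma half (D W : ℕ) : ((D : ℚ) < (W : ℕ) / 2) ↔ 2 * D < W := by
  rw [lt_div_iff₀ (by norm_num : (0:ℚ) < 2)]
  have : ((D : ℚ) * 2) = ((2 * D : ℕ) : ℚ) := by push_cast; ring
  rw [this]
  exact_mod_cast Nat.cast_lt

lemma cup_eq_A_iff (R : V → Cand → Cand → Prop) :
    cupWinner w R = A ↔
      (wAbove w R B A < wAbove w R A B ∧ wAbove w R C A < wAbove w R A C) := by
  unfold cupWinner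
  by_cases h1 : wAbove w R B A < wAbove w R A B
  · simp only [gt_iff_lt, if_pos h1]
    by_cases h2 : wAbove w R C A < wAbove w R A C
    · simp [h1, h2]
    · simp only [if_neg h2]
      constructor
      · intro h; exact absurd h (by decide)
      · intro h; exact absurd h.2 h2
  · simp only [gt_iff_lt, if_neg h1]
    constructor
    · intro h
      split_ifs at h <;> exact absurd h (by decide)
    · intro h; exact absurd h.1 h1

lemma cup_eq_B_iff (R : V → Cand → Cand → Prop) :
    cupWinner w R = B ↔
      (¬ (wAbove w R B A < wAbove w R A B) ∧ wAbove w R C B < wAbove w R B C) := by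
  unfold cupWinner
  by_cases h1 : wAbove w R B A < wAbove w R A B
  · simp only [gt_iff_lt, if_pos h1]
    constructor
    · intro h
      split_ifs at h <;> exact absurd h (by decide)
    · intro h; exact absurd h1 h.1
  · simp only [gt_iff_lt, if_neg h1]
    by_cases h2 : wAbove w R C B < wAbove w R B C
    · simp [h1, h2]
    · simp only [if_neg h2]
      constructor
      · intro h; exact absurd h (by decide)
      · intro h; exact absurd h.2 h2

end wLemmas


/-- Build a strict total order from a rank function with distinct values. -/
lemma sto_of_rk {q : Cand → Cand → Prop} {a b c : Cand}
    (hab : a ≠ b) (hac : a ≠ c) (hbc : b ≠ c)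
    (hcov : ∀ x : Cand, x = a ∨ x = b ∨ x = c) :
    IsStrictTotalOrder Cand (fun x y => rk q a b c x < rk q a b c y) := by
  refine { toTrichotomous := ⟨fun x y h1 h2 => ?_⟩,
           toIsStrictOrder := { toIrrefl := ⟨fun x => Nat.lt_irrefl _⟩,
                                toIsTrans := ⟨fun x y z => Nat.lt_trans⟩ } }
  · rcases Nat.lt_trichotomy (rk q a b c x) (rk q a b c y) with h | h | h
    · exact absurd h h1
    · by_contra hxy
      exact rk_ne hab hac hbc hcov hxy h
    · exact absurd h h2

lemma hcovA : ∀ x : Cand, x = A ∨ x = B ∨ x = C := by intro x; cases x <;> simp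
lemma hcovB : ∀ x : Cand, x = B ∨ x = A ∨ x = C := by intro x; cases x <;> simp

theorem possible_cup_winners_iff {V : Type*} [Fintype V]
    (w : V → ℕ) (hw : ∀ v, 0 < w v)
    (hodd : Odd (∑ v, w v))
    (Q : V → Cand → Cand → Prop) (hQ : ∀ v, IsStrictOrder Cand (Q v)) :
    ((∃ R : V → Cand → Cand → Prop,
        (∀ v, IsStrictTotalOrder Cand (R v)) ∧
        (∀ v a b, Q v a b → R v a b) ∧
        cupWinner w R = A)
      ↔ ((wAbove w Q B A : ℚ) < (∑ v, w v : ℕ) / 2 ∧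
         (wAbove w Q C A : ℚ) < (∑ v, w v : ℕ) / 2))
    ∧
    ((∃ R : V → Cand → Cand → Prop,
        (∀ v, IsStrictTotalOrder Cand (R v)) ∧
        (∀ v a b, Q v a b → R v a b) ∧
        cupWinner w R = B)
      ↔ ((wAbove w Q A B : ℚ) < (∑ v, w v : ℕ) / 2 ∧
         (wAbove w Q C B : ℚ) < (∑ v, w v : ℕ) / 2)) := by
  obtain ⟨k, hk⟩ := hodd
  have hAB : (A : Cand) ≠ B := by decide
  have hAC : (A : Cand) ≠ C := by decide
  have hBC : (B : Cand) ≠ C := by decide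
  have hBA : (B : Cand) ≠ A := by decide
  constructor
  · -- A part
    constructor
    · rintro ⟨R, hR, hext, hwin⟩
      rw [cup_eq_A_iff] at hwin
      obtain ⟨h1, h2⟩ := hwin
      have hadd1 := wAbove_add w hR hAB
      have hadd2 := wAbove_add w hR hAC
      have m1 : wAbove w Q B A ≤ wAbove w R B A := wAbove_mono w fun v => hext v B A
      have m2 : wAbove w Q C A ≤ wAbove w R C A := wAbove_mono w fun v => hext v C A
      rw [half, half]
      omega
    · rintro ⟨hd1, hd2⟩
      rw [half] at hd1 hd2
      set R : V → Cand → Cand → Prop :=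
        fun v x y => rk (Q v) A B C x < rk (Q v) A B C y with hRdef
      have hR : ∀ v, IsStrictTotalOrder Cand (R v) :=
        fun v => sto_of_rk hAB hAC hBC hcovA
      have hext : ∀ v a b, Q v a b → R v a b := by
        intro v x y h
        haveI := hQ v
        exact rk_extend (fun z => irrefl_of (Q v) z)
          (fun h1 h2 => trans_of (Q v) h1 h2) hAB hAC hBC hcovA h
      refine ⟨R, hR, hext, ?_⟩
      rw [cup_eq_A_iff]
      have e1 : wAbove w R B A = wAbove w Q B A := by
        refine le_antisymm (wAbove_mono w fun v h => ?_) (wAbove_mono w fun v => hext v B A)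
        by_contra hq
        exact Nat.lt_asymm (rk_fav_b hAB hq) h
      have e2 : wAbove w R C A = wAbove w Q C A := by
        refine le_antisymm (wAbove_mono w fun v h => ?_) (wAbove_mono w fun v => hext v C A)
        by_contra hq
        exact Nat.lt_asymm (rk_fav_c hAC hBC hq) h
      have hadd1 := wAbove_add w hR hAB
      have hadd2 := wAbove_add w hR hAC
      omega
  · -- B part
    constructor
    · rintro ⟨R, hR, hext, hwin⟩
      rw [cup_eq_B_iff] at hwin
      obtain ⟨h1, h2⟩ := hwin
      have hadd1 := wAbove_add w hR hAB
      have hadd2 := wAbove_add w hR hBC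
      have m1 : wAbove w Q A B ≤ wAbove w R A B := wAbove_mono w fun v => hext v A B
      have m2 : wAbove w Q C B ≤ wAbove w R C B := wAbove_mono w fun v => hext v C B
      rw [half, half]
      omega
    · rintro ⟨hd1, hd2⟩
      rw [half] at hd1 hd2
      set R : V → Cand → Cand → Prop :=
        fun v x y => rk (Q v) B A C x < rk (Q v) B A C y with hRdef
      have hR : ∀ v, IsStrictTotalOrder Cand (R v) :=
        fun v => sto_of_rk hBA hBC hAC hcovB
      have hext : ∀ v a b, Q v a b → R v a b := by
        intro v x y h
        haveI := hQ v
        exact rk_extend (fun z => irrefl_of (Q v) z)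
          (fun h1 h2 => trans_of (Q v) h1 h2) hBA hBC hAC hcovB h
      refine ⟨R, hR, hext, ?_⟩
      rw [cup_eq_B_iff]
      have e1 : wAbove w R A B = wAbove w Q A B := by
        refine le_antisymm (wAbove_mono w fun v h => ?_) (wAbove_mono w fun v => hext v A B)
        by_contra hq
        exact Nat.lt_asymm (rk_fav_b hBA hq) h
      have e2 : wAbove w R C B = wAbove w Q C B := by
        refine le_antisymm (wAbove_mono w fun v h => ?_) (wAbove_mono w fun v => hext v C B)
        by_contra hq
        exact Nat.lt_asymm (rk_fav_c hBC hAC hq) h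
      have hadd1 := wAbove_add w hR hAB
      have hadd2 := wAbove_add w hR hBC
      omega


end Stmt11
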